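/- Let A and B be small categories and let ⊠ : Psh(A) × Psh(B) → Psh(A×B) be the external product (X ⊠ Y)_{a,b} = X_a × Y_b, with right adjoints X\(−) and (−)/Y. Then for a morphism u of Psh(A), a morphism v of Psh(B), and a morphism f of Psh(A×B), the following are equivalent: (u ⊠' v) ⊥ f, u ⊥ ⟨f/v⟩, and v ⊥ ⟨u\f⟩. -/

import Mathlib

open CategoryTheory CategoryTheory.Limits Opposite

namespace Paper

variable {A : Type} [SmallCategory A] {B : Type} [SmallCategory B]

/-- The external product `X ⊠ Y` of presheaves: `(X ⊠ Y)_{a,b} = X_a × Y_b`. -/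
@[simps]
def extProd (X : Aᵒᵖ ⥤ Type) (Y : Bᵒᵖ ⥤ Type) : (A × B)ᵒᵖ ⥤ Type where
  obj ab := X.obj (op ab.unop.1) × Y.obj (op ab.unop.2)
  map f := TypeCat.ofHom fun p => (X.map f.unop.1.op p.1, Y.map f.unop.2.op p.2)

/-- Functoriality of the external product. -/
@[simps]
def extProdMap {X X' : Aᵒᵖ ⥤ Type} {Y Y' : Bᵒᵖ ⥤ Type} (u : X ⟶ X') (v : Y ⟶ Y') :
    extProd X Y ⟶ extProd X' Y' where
  app ab := TypeCat.ofHom fun p => (u.app _ p.1, v.app _ p.2)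
  naturality ab ab' f := by
    refine ConcreteCategory.hom_ext _ _ fun p => ?_
    change (u.app _ (X.map f.unop.1.op p.1), v.app _ (Y.map f.unop.2.op p.2)) =
      (X'.map f.unop.1.op (u.app _ p.1), Y'.map f.unop.2.op (v.app _ p.2))
    rw [FunctorToTypes.naturality, FunctorToTypes.naturality]

lemma extProdMap_id (X : Aᵒᵖ ⥤ Type) (Y : Bᵒᵖ ⥤ Type) :
    extProdMap (𝟙 X) (𝟙 Y) = 𝟙 (extProd X Y) := rfl

lemma extProdMap_comp {X X' X'' : Aᵒᵖ ⥤ Type} {Y Y' Y'' : Bᵒᵖ ⥤ Type}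
    (u : X ⟶ X') (u' : X' ⟶ X'') (v : Y ⟶ Y') (v' : Y' ⟶ Y'') :
    extProdMap (u ≫ u') (v ≫ v') = extProdMap u v ≫ extProdMap u' v' := rfl

lemma extProdMap_comp_right (X : Aᵒᵖ ⥤ Type) {Y Y' Y'' : Bᵒᵖ ⥤ Type}
    (v : Y ⟶ Y') (v' : Y' ⟶ Y'') :
    extProdMap (𝟙 X) (v ≫ v') = extProdMap (𝟙 X) v ≫ extProdMap (𝟙 X) v' := by
  rw [← extProdMap_comp, Category.id_comp]

lemma extProdMap_comp_left {X X' X'' : Aᵒᵖ ⥤ Type} (u : X ⟶ X') (u' : X' ⟶ X'')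
    (Y : Bᵒᵖ ⥤ Type) :
    extProdMap (u ≫ u') (𝟙 Y) = extProdMap u (𝟙 Y) ≫ extProdMap u' (𝟙 Y) := by
  rw [← extProdMap_comp, Category.id_comp]

/-- The pushout-product `u ⊠' v : U ⊠ T ⊔_{U ⊠ S} V ⊠ S → V ⊠ T`. -/
noncomputable def pushoutProduct {U V : Aᵒᵖ ⥤ Type} {S T : Bᵒᵖ ⥤ Type}
    (u : U ⟶ V) (v : S ⟶ T) :
    pushout (extProdMap (𝟙 U) v) (extProdMap u (𝟙 S)) ⟶ extProd V T :=
  pushout.desc (extProdMap u (𝟙 T)) (extProdMap (𝟙 V) v)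
    (by rw [← extProdMap_comp, ← extProdMap_comp, Category.id_comp, Category.id_comp,
      Category.comp_id, Category.comp_id])

/-- `U \ X`, the presheaf on `B` with `(U\X)_b = Hom(U ⊠ b, X)`. -/
@[simps]
def bs (U : Aᵒᵖ ⥤ Type) (X : (A × B)ᵒᵖ ⥤ Type) : Bᵒᵖ ⥤ Type where
  obj b := extProd U (yoneda.obj b.unop) ⟶ X
  map g := TypeCat.ofHom fun φ => extProdMap (𝟙 U) (yoneda.map g.unop) ≫ φ
  map_id b := by
    refine ConcreteCategory.hom_ext _ _ fun φ => ?_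
    dsimp
    rw [CategoryTheory.Functor.map_id, extProdMap_id, Category.id_comp]
  map_comp g h := by
    refine ConcreteCategory.hom_ext _ _ fun φ => ?_
    dsimp
    rw [CategoryTheory.Functor.map_comp, extProdMap_comp_right, Category.assoc]

/-- `X / S`, the presheaf on `A` with `(X/S)_a = Hom(a ⊠ S, X)`. -/
@[simps]
def sl (X : (A × B)ᵒᵖ ⥤ Type) (S : Bᵒᵖ ⥤ Type) : Aᵒᵖ ⥤ Type where
  obj a := extProd (yoneda.obj a.unop) S ⟶ X
  map g := TypeCat.ofHom fun φ => extProdMap (yoneda.map g.unop) (𝟙 S) ≫ φ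
  map_id a := by
    refine ConcreteCategory.hom_ext _ _ fun φ => ?_
    dsimp
    rw [CategoryTheory.Functor.map_id, extProdMap_id, Category.id_comp]
  map_comp g h := by
    refine ConcreteCategory.hom_ext _ _ fun φ => ?_
    dsimp
    rw [CategoryTheory.Functor.map_comp, extProdMap_comp_left, Category.assoc]

/-- Contravariant functoriality of `U \ X` in `U`. -/
@[simps]
def bsMapLeft {U V : Aᵒᵖ ⥤ Type} (u : U ⟶ V) (X : (A × B)ᵒᵖ ⥤ Type) :
    bs V X ⟶ bs U X where
  app b := TypeCat.ofHom fun φ => extProdMap u (𝟙 _) ≫ φ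
  naturality b b' g := by
    refine ConcreteCategory.hom_ext _ _ fun φ => ?_
    change extProd V (yoneda.obj b.unop) ⟶ X at φ
    change extProdMap u (𝟙 _) ≫ (extProdMap (𝟙 V) (yoneda.map g.unop) ≫ φ) =
      extProdMap (𝟙 U) (yoneda.map g.unop) ≫ (extProdMap u (𝟙 _) ≫ φ)
    rw [← Category.assoc, ← Category.assoc, ← extProdMap_comp, ← extProdMap_comp,
      Category.id_comp, Category.comp_id, Category.id_comp, Category.comp_id]

/-- Covariant functoriality of `U \ X` in `X`. -/
@[simps]
def bsMapRight (U : Aᵒᵖ ⥤ Type) {X Y : (A × B)ᵒᵖ ⥤ Type} (f : X ⟶ Y) :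
    bs U X ⟶ bs U Y where
  app b := TypeCat.ofHom fun φ => φ ≫ f
  naturality b b' g := by
    refine ConcreteCategory.hom_ext _ _ fun φ => ?_
    change extProd U (yoneda.obj b.unop) ⟶ X at φ
    change (extProdMap (𝟙 U) (yoneda.map g.unop) ≫ φ) ≫ f =
      extProdMap (𝟙 U) (yoneda.map g.unop) ≫ (φ ≫ f)
    rw [Category.assoc]

/-- Contravariant functoriality of `X / S` in `S`. -/
@[simps]
def slMapLeft {S T : Bᵒᵖ ⥤ Type} (v : S ⟶ T) (X : (A × B)ᵒᵖ ⥤ Type) :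
    sl X T ⟶ sl X S where
  app a := TypeCat.ofHom fun φ => extProdMap (𝟙 _) v ≫ φ
  naturality a a' g := by
    refine ConcreteCategory.hom_ext _ _ fun φ => ?_
    change extProd (yoneda.obj a.unop) T ⟶ X at φ
    change extProdMap (𝟙 _) v ≫ (extProdMap (yoneda.map g.unop) (𝟙 T) ≫ φ) =
      extProdMap (yoneda.map g.unop) (𝟙 S) ≫ (extProdMap (𝟙 _) v ≫ φ)
    rw [← Category.assoc, ← Category.assoc, ← extProdMap_comp, ← extProdMap_comp,
      Category.id_comp, Category.comp_id, Category.id_comp, Category.comp_id]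

/-- Covariant functoriality of `X / S` in `X`. -/
@[simps]
def slMapRight {X Y : (A × B)ᵒᵖ ⥤ Type} (f : X ⟶ Y) (S : Bᵒᵖ ⥤ Type) :
    sl X S ⟶ sl Y S where
  app a := TypeCat.ofHom fun φ => φ ≫ f
  naturality a a' g := by
    refine ConcreteCategory.hom_ext _ _ fun φ => ?_
    change extProd (yoneda.obj a.unop) S ⟶ X at φ
    change (extProdMap (yoneda.map g.unop) (𝟙 S) ≫ φ) ≫ f =
      extProdMap (yoneda.map g.unop) (𝟙 S) ≫ (φ ≫ f)
    rw [Category.assoc]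

/-- The pullback-hom `⟨u \ f⟩ : V\X ⟶ V\Y ×_{U\Y} U\X`. -/
noncomputable def bsCorner {U V : Aᵒᵖ ⥤ Type} {X Y : (A × B)ᵒᵖ ⥤ Type}
    (u : U ⟶ V) (f : X ⟶ Y) :
    bs V X ⟶ pullback (bsMapLeft u Y) (bsMapRight U f) :=
  pullback.lift (bsMapRight V f) (bsMapLeft u X) (by
    refine NatTrans.ext (funext fun b => ?_)
    refine ConcreteCategory.hom_ext _ _ fun φ => ?_
    change extProd V (yoneda.obj b.unop) ⟶ X at φ
    change extProdMap u (𝟙 _) ≫ (φ ≫ f) = (extProdMap u (𝟙 _) ≫ φ) ≫ f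
    rw [Category.assoc])

/-- The pullback-hom `⟨f / v⟩ : X/T ⟶ Y/T ×_{Y/S} X/S`. -/
noncomputable def slCorner {X Y : (A × B)ᵒᵖ ⥤ Type} {S T : Bᵒᵖ ⥤ Type}
    (f : X ⟶ Y) (v : S ⟶ T) :
    sl X T ⟶ pullback (slMapLeft v Y) (slMapRight f S) :=
  pullback.lift (slMapRight f T) (slMapLeft v X) (by
    refine NatTrans.ext (funext fun a => ?_)
    refine ConcreteCategory.hom_ext _ _ fun φ => ?_
    change extProd (yoneda.obj a.unop) T ⟶ X at φ
    change extProdMap (𝟙 _) v ≫ (φ ≫ f) = (extProdMap (𝟙 _) v ≫ φ) ≫ f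
    rw [Category.assoc])

end Paper

namespace Aux

open CategoryTheory CategoryTheory.Limits Opposite Paper

variable {A : Type} [SmallCategory A] {B : Type} [SmallCategory B]

/-! ### Currying on the `sl` side: `(W ⊠ S ⟶ X) ≃ (W ⟶ X/S)` -/

@[simps]
def slCurry {W : Aᵒᵖ ⥤ Type} {S : Bᵒᵖ ⥤ Type} {X : (A × B)ᵒᵖ ⥤ Type}
    (φ : extProd W S ⟶ X) : W ⟶ sl X S where
  app a := TypeCat.ofHom fun w =>
    { app := fun ab => TypeCat.ofHom fun gs => φ.app ab (W.map gs.1.op w, gs.2)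
      naturality := fun ab ab' h => by
        refine ConcreteCategory.hom_ext _ _ fun gs => ?_
        change φ.app ab' (W.map (gs.1.op ≫ h.unop.1.op) w, S.map h.unop.2.op gs.2) =
          X.map h (φ.app ab (W.map gs.1.op w, gs.2))
        rw [FunctorToTypes.map_comp_apply]
        exact NatTrans.naturality_apply (D := Type) φ h
          ((W.map gs.1.op w, gs.2) : W.obj (op ab.unop.1) × S.obj (op ab.unop.2)) }
  naturality a a' k := by
    refine ConcreteCategory.hom_ext _ _ fun w => ?_
    apply NatTrans.ext
    funext ab
    refine ConcreteCategory.hom_ext _ _ fun gs => ?_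
    change φ.app ab (W.map gs.1.op (W.map k w), gs.2) = φ.app ab (W.map (k ≫ gs.1.op) w, gs.2)
    rw [FunctorToTypes.map_comp_apply]

@[simps]
def slUncurry {W : Aᵒᵖ ⥤ Type} {S : Bᵒᵖ ⥤ Type} {X : (A × B)ᵒᵖ ⥤ Type}
    (ψ : W ⟶ sl X S) : extProd W S ⟶ X where
  app ab := TypeCat.ofHom fun ws => NatTrans.app (ψ.app (op ab.unop.1) ws.1) ab (𝟙 _, ws.2)
  naturality ab ab' h := by
    refine ConcreteCategory.hom_ext _ _ fun ws => ?_
    change NatTrans.app (ψ.app (op ab'.unop.1) (W.map h.unop.1.op ws.1)) ab'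
        (𝟙 _, S.map h.unop.2.op ws.2) =
      X.map h (NatTrans.app (ψ.app (op ab.unop.1) ws.1) ab (𝟙 _, ws.2))
    rw [NatTrans.naturality_apply ψ h.unop.1.op ws.1]
    refine Eq.trans ?_ (NatTrans.naturality_apply (D := Type)
      (ψ.app (op ab.unop.1) ws.1 : extProd (yoneda.obj ab.unop.1) S ⟶ X) h
      ((𝟙 _, ws.2) : (ab.unop.1 ⟶ ab.unop.1) × S.obj (op ab.unop.2)))
    change NatTrans.app (ψ.app (op ab.unop.1) ws.1) ab' (𝟙 _ ≫ h.unop.1, S.map h.unop.2.op ws.2) =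
      NatTrans.app (ψ.app (op ab.unop.1) ws.1) ab' (h.unop.1 ≫ 𝟙 _, S.map h.unop.2.op ws.2)
    rw [Category.id_comp, Category.comp_id]

lemma slCurry_slUncurry {W : Aᵒᵖ ⥤ Type} {S : Bᵒᵖ ⥤ Type} {X : (A × B)ᵒᵖ ⥤ Type}
    (ψ : W ⟶ sl X S) : slCurry (slUncurry ψ) = ψ := by
  apply NatTrans.ext
  funext a
  refine ConcreteCategory.hom_ext _ _ fun w => ?_
  apply NatTrans.ext
  funext ab
  refine ConcreteCategory.hom_ext _ _ fun gs => ?_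
  change NatTrans.app (ψ.app (op ab.unop.1) (W.map gs.1.op w)) ab (𝟙 _, gs.2) = _
  rw [NatTrans.naturality_apply ψ gs.1.op w]
  change NatTrans.app (ψ.app a w) ab (𝟙 _ ≫ gs.1, gs.2) = NatTrans.app (ψ.app a w) ab (gs.1, gs.2)
  rw [Category.id_comp]

lemma slUncurry_slCurry {W : Aᵒᵖ ⥤ Type} {S : Bᵒᵖ ⥤ Type} {X : (A × B)ᵒᵖ ⥤ Type}
    (φ : extProd W S ⟶ X) : slUncurry (slCurry φ) = φ := by
  apply NatTrans.ext
  funext ab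
  refine ConcreteCategory.hom_ext _ _ fun ws => ?_
  change φ.app ab (W.map (𝟙 _) ws.1, ws.2) = _
  rw [FunctorToTypes.map_id_apply]
  rfl

lemma slCurry_left {W' W : Aᵒᵖ ⥤ Type} {S : Bᵒᵖ ⥤ Type} {X : (A × B)ᵒᵖ ⥤ Type}
    (w : W' ⟶ W) (φ : extProd W S ⟶ X) :
    slCurry (extProdMap w (𝟙 S) ≫ φ) = w ≫ slCurry φ := by
  apply NatTrans.ext
  funext a
  refine ConcreteCategory.hom_ext _ _ fun x => ?_
  apply NatTrans.ext
  funext ab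
  refine ConcreteCategory.hom_ext _ _ fun gs => ?_
  change φ.app ab (w.app (op ab.unop.1) (W'.map gs.1.op x), gs.2) =
    φ.app ab (W.map gs.1.op (w.app a x), gs.2)
  rw [FunctorToTypes.naturality]

lemma slCurry_right {W : Aᵒᵖ ⥤ Type} {S : Bᵒᵖ ⥤ Type} {X Y : (A × B)ᵒᵖ ⥤ Type}
    (φ : extProd W S ⟶ X) (f : X ⟶ Y) :
    slCurry (φ ≫ f) = slCurry φ ≫ slMapRight f S := by
  apply NatTrans.ext
  funext a
  refine ConcreteCategory.hom_ext _ _ fun x => ?_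
  apply NatTrans.ext
  funext ab
  refine ConcreteCategory.hom_ext _ _ fun gs => ?_
  rfl

lemma slCurry_middle {W : Aᵒᵖ ⥤ Type} {S T : Bᵒᵖ ⥤ Type} {X : (A × B)ᵒᵖ ⥤ Type}
    (v : S ⟶ T) (φ : extProd W T ⟶ X) :
    slCurry (extProdMap (𝟙 W) v ≫ φ) = slCurry φ ≫ slMapLeft v X := by
  apply NatTrans.ext
  funext a
  refine ConcreteCategory.hom_ext _ _ fun x => ?_
  apply NatTrans.ext
  funext ab
  refine ConcreteCategory.hom_ext _ _ fun gs => ?_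
  rfl

/-! ### Currying on the `bs` side: `(U ⊠ Z ⟶ X) ≃ (Z ⟶ U\X)` -/

@[simps]
def bsCurry {U : Aᵒᵖ ⥤ Type} {Z : Bᵒᵖ ⥤ Type} {X : (A × B)ᵒᵖ ⥤ Type}
    (φ : extProd U Z ⟶ X) : Z ⟶ bs U X where
  app b := TypeCat.ofHom fun z =>
    { app := fun ab => TypeCat.ofHom fun pg => φ.app ab (pg.1, Z.map pg.2.op z)
      naturality := fun ab ab' h => by
        refine ConcreteCategory.hom_ext _ _ fun pg => ?_
        change φ.app ab' (U.map h.unop.1.op pg.1, Z.map (pg.2.op ≫ h.unop.2.op) z) =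
          X.map h (φ.app ab (pg.1, Z.map pg.2.op z))
        rw [FunctorToTypes.map_comp_apply]
        exact NatTrans.naturality_apply (D := Type) φ h
          ((pg.1, Z.map pg.2.op z) : U.obj (op ab.unop.1) × Z.obj (op ab.unop.2)) }
  naturality b b' k := by
    refine ConcreteCategory.hom_ext _ _ fun z => ?_
    apply NatTrans.ext
    funext ab
    refine ConcreteCategory.hom_ext _ _ fun pg => ?_
    change φ.app ab (pg.1, Z.map pg.2.op (Z.map k z)) = φ.app ab (pg.1, Z.map (k ≫ pg.2.op) z)
    rw [FunctorToTypes.map_comp_apply]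

@[simps]
def bsUncurry {U : Aᵒᵖ ⥤ Type} {Z : Bᵒᵖ ⥤ Type} {X : (A × B)ᵒᵖ ⥤ Type}
    (ψ : Z ⟶ bs U X) : extProd U Z ⟶ X where
  app ab := TypeCat.ofHom fun uz => NatTrans.app (ψ.app (op ab.unop.2) uz.2) ab (uz.1, 𝟙 _)
  naturality ab ab' h := by
    refine ConcreteCategory.hom_ext _ _ fun uz => ?_
    change NatTrans.app (ψ.app (op ab'.unop.2) (Z.map h.unop.2.op uz.2)) ab'
        (U.map h.unop.1.op uz.1, 𝟙 _) =
      X.map h (NatTrans.app (ψ.app (op ab.unop.2) uz.2) ab (uz.1, 𝟙 _))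
    rw [NatTrans.naturality_apply ψ h.unop.2.op uz.2]
    refine Eq.trans ?_ (NatTrans.naturality_apply (D := Type)
      (ψ.app (op ab.unop.2) uz.2 : extProd U (yoneda.obj ab.unop.2) ⟶ X) h
      ((uz.1, 𝟙 _) : U.obj (op ab.unop.1) × (ab.unop.2 ⟶ ab.unop.2)))
    change NatTrans.app (ψ.app (op ab.unop.2) uz.2) ab' (U.map h.unop.1.op uz.1, 𝟙 _ ≫ h.unop.2) =
      NatTrans.app (ψ.app (op ab.unop.2) uz.2) ab' (U.map h.unop.1.op uz.1, h.unop.2 ≫ 𝟙 _)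
    rw [Category.id_comp, Category.comp_id]

lemma bsCurry_bsUncurry {U : Aᵒᵖ ⥤ Type} {Z : Bᵒᵖ ⥤ Type} {X : (A × B)ᵒᵖ ⥤ Type}
    (ψ : Z ⟶ bs U X) : bsCurry (bsUncurry ψ) = ψ := by
  apply NatTrans.ext
  funext b
  refine ConcreteCategory.hom_ext _ _ fun z => ?_
  apply NatTrans.ext
  funext ab
  refine ConcreteCategory.hom_ext _ _ fun pg => ?_
  change NatTrans.app (ψ.app (op ab.unop.2) (Z.map pg.2.op z)) ab (pg.1, 𝟙 _) = _
  rw [NatTrans.naturality_apply ψ pg.2.op z]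
  change NatTrans.app (ψ.app b z) ab (pg.1, 𝟙 _ ≫ pg.2) = NatTrans.app (ψ.app b z) ab (pg.1, pg.2)
  rw [Category.id_comp]

lemma bsUncurry_bsCurry {U : Aᵒᵖ ⥤ Type} {Z : Bᵒᵖ ⥤ Type} {X : (A × B)ᵒᵖ ⥤ Type}
    (φ : extProd U Z ⟶ X) : bsUncurry (bsCurry φ) = φ := by
  apply NatTrans.ext
  funext ab
  refine ConcreteCategory.hom_ext _ _ fun uz => ?_
  change φ.app ab (uz.1, Z.map (𝟙 _) uz.2) = _
  rw [FunctorToTypes.map_id_apply]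
  rfl

lemma bsCurry_left {U : Aᵒᵖ ⥤ Type} {Z' Z : Bᵒᵖ ⥤ Type} {X : (A × B)ᵒᵖ ⥤ Type}
    (z : Z' ⟶ Z) (φ : extProd U Z ⟶ X) :
    bsCurry (extProdMap (𝟙 U) z ≫ φ) = z ≫ bsCurry φ := by
  apply NatTrans.ext
  funext b
  refine ConcreteCategory.hom_ext _ _ fun x => ?_
  apply NatTrans.ext
  funext ab
  refine ConcreteCategory.hom_ext _ _ fun pg => ?_
  change φ.app ab (pg.1, z.app (op ab.unop.2) (Z'.map pg.2.op x)) =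
    φ.app ab (pg.1, Z.map pg.2.op (z.app b x))
  rw [FunctorToTypes.naturality]

lemma bsCurry_right {U : Aᵒᵖ ⥤ Type} {Z : Bᵒᵖ ⥤ Type} {X Y : (A × B)ᵒᵖ ⥤ Type}
    (φ : extProd U Z ⟶ X) (f : X ⟶ Y) :
    bsCurry (φ ≫ f) = bsCurry φ ≫ bsMapRight U f := by
  apply NatTrans.ext
  funext b
  refine ConcreteCategory.hom_ext _ _ fun x => ?_
  apply NatTrans.ext
  funext ab
  refine ConcreteCategory.hom_ext _ _ fun pg => ?_
  rfl

lemma bsCurry_middle {U V : Aᵒᵖ ⥤ Type} {Z : Bᵒᵖ ⥤ Type} {X : (A × B)ᵒᵖ ⥤ Type}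
    (u : U ⟶ V) (φ : extProd V Z ⟶ X) :
    bsCurry (extProdMap u (𝟙 Z) ≫ φ) = bsCurry φ ≫ bsMapLeft u X := by
  apply NatTrans.ext
  funext b
  refine ConcreteCategory.hom_ext _ _ fun x => ?_
  apply NatTrans.ext
  funext ab
  refine ConcreteCategory.hom_ext _ _ fun pg => ?_
  rfl

/-! ### The two lifting-property equivalences -/

lemma slCurry_inj {W : Aᵒᵖ ⥤ Type} {S : Bᵒᵖ ⥤ Type} {X : (A × B)ᵒᵖ ⥤ Type}
    {φ φ' : extProd W S ⟶ X} (h : slCurry φ = slCurry φ') : φ = φ' := by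
  rw [← slUncurry_slCurry φ, h, slUncurry_slCurry]

lemma bsCurry_inj {U : Aᵒᵖ ⥤ Type} {Z : Bᵒᵖ ⥤ Type} {X : (A × B)ᵒᵖ ⥤ Type}
    {φ φ' : extProd U Z ⟶ X} (h : bsCurry φ = bsCurry φ') : φ = φ' := by
  rw [← bsUncurry_bsCurry φ, h, bsUncurry_bsCurry]

section
variable {U V : Aᵒᵖ ⥤ Type} {S T : Bᵒᵖ ⥤ Type} {X Y : (A × B)ᵒᵖ ⥤ Type}
  (u : U ⟶ V) (v : S ⟶ T) (f : X ⟶ Y)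

lemma pp_inl : pushout.inl _ _ ≫ pushoutProduct u v = extProdMap u (𝟙 T) :=
  pushout.inl_desc _ _ _

lemma pp_inr : pushout.inr _ _ ≫ pushoutProduct u v = extProdMap (𝟙 V) v :=
  pushout.inr_desc _ _ _

lemma slCorner_fst : slCorner f v ≫ pullback.fst _ _ = slMapRight f T :=
  pullback.lift_fst _ _ _

lemma slCorner_snd : slCorner f v ≫ pullback.snd _ _ = slMapLeft v X :=
  pullback.lift_snd _ _ _

lemma bsCorner_fst : bsCorner u f ≫ pullback.fst _ _ = bsMapRight V f :=
  pullback.lift_fst _ _ _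

lemma bsCorner_snd : bsCorner u f ≫ pullback.snd _ _ = bsMapLeft u X :=
  pullback.lift_snd _ _ _

lemma iff_sl :
    HasLiftingProperty (pushoutProduct u v) f ↔ HasLiftingProperty u (slCorner f v) := by
  constructor
  · intro H
    constructor
    intro top' bot' sq
    have hfst : u ≫ bot' ≫ pullback.fst _ _ = top' ≫ slMapRight f T := by
      rw [← Category.assoc, ← sq.w, Category.assoc, slCorner_fst]
    have hsnd : u ≫ bot' ≫ pullback.snd _ _ = top' ≫ slMapLeft v X := by
      rw [← Category.assoc, ← sq.w, Category.assoc, slCorner_snd]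
    set top1 : extProd U T ⟶ X := slUncurry top' with htop1
    set bot0 : extProd V T ⟶ Y := slUncurry (bot' ≫ pullback.fst _ _) with hbot0
    set top2 : extProd V S ⟶ X := slUncurry (bot' ≫ pullback.snd _ _) with htop2
    have hglue : extProdMap (𝟙 U) v ≫ top1 = extProdMap u (𝟙 S) ≫ top2 := by
      apply slCurry_inj
      rw [slCurry_middle, slCurry_left, htop1, htop2, slCurry_slUncurry,
        slCurry_slUncurry, ← hsnd]
    have sq2 : CommSq (pushout.desc top1 top2 hglue) (pushoutProduct u v) f bot0 := by
      constructor
      apply pushout.hom_ext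
      · rw [← Category.assoc, ← Category.assoc, pushout.inl_desc, pp_inl]
        apply slCurry_inj
        rw [slCurry_right, slCurry_left, htop1, hbot0, slCurry_slUncurry,
          slCurry_slUncurry, ← hfst]
      · rw [← Category.assoc, ← Category.assoc, pushout.inr_desc, pp_inr]
        apply slCurry_inj
        rw [slCurry_right, slCurry_middle, htop2, hbot0, slCurry_slUncurry,
          slCurry_slUncurry, Category.assoc, Category.assoc, pullback.condition]
    refine ⟨⟨⟨slCurry sq2.lift, ?_, ?_⟩⟩⟩
    · rw [← slCurry_left, ← pp_inl u v, Category.assoc, sq2.fac_left,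
        pushout.inl_desc, htop1, slCurry_slUncurry]
    · apply pullback.hom_ext
      · rw [Category.assoc, slCorner_fst, ← slCurry_right, sq2.fac_right, hbot0,
          slCurry_slUncurry]
      · rw [Category.assoc, slCorner_snd, ← slCurry_middle, ← pp_inr u v,
          Category.assoc, sq2.fac_left, pushout.inr_desc, htop2, slCurry_slUncurry]
  · intro H
    constructor
    intro top bot sq
    set top1 : extProd U T ⟶ X := pushout.inl _ _ ≫ top with htop1
    set top2 : extProd V S ⟶ X := pushout.inr _ _ ≫ top with htop2
    have hb : slCurry bot ≫ slMapLeft v Y = slCurry top2 ≫ slMapRight f S := by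
      rw [← slCurry_middle, ← slCurry_right, htop2, Category.assoc, sq.w,
        ← Category.assoc, pp_inr]
    have sq2 : CommSq (slCurry top1) u (slCorner f v)
        (pullback.lift (slCurry bot) (slCurry top2) hb) := by
      constructor
      apply pullback.hom_ext
      · rw [Category.assoc, Category.assoc, slCorner_fst, pullback.lift_fst,
          ← slCurry_right, ← slCurry_left, htop1, Category.assoc, sq.w,
          ← Category.assoc, pp_inl]
      · rw [Category.assoc, Category.assoc, slCorner_snd, pullback.lift_snd,
          ← slCurry_middle, ← slCurry_left, htop1, htop2, ← Category.assoc,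
          ← Category.assoc, pushout.condition]
    refine ⟨⟨⟨slUncurry sq2.lift, ?_, ?_⟩⟩⟩
    · apply pushout.hom_ext
      · rw [← Category.assoc, pp_inl]
        apply slCurry_inj
        rw [slCurry_left, slCurry_slUncurry, sq2.fac_left, htop1]
      · rw [← Category.assoc, pp_inr]
        apply slCurry_inj
        rw [slCurry_middle, slCurry_slUncurry]
        have h3 := sq2.fac_right =≫ pullback.snd _ _
        rw [Category.assoc, slCorner_snd, pullback.lift_snd] at h3
        rw [h3, htop2]
    · apply slCurry_inj
      rw [slCurry_right, slCurry_slUncurry]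
      have h3 := sq2.fac_right =≫ pullback.fst _ _
      rw [Category.assoc, slCorner_fst, pullback.lift_fst] at h3
      rw [h3]

lemma iff_bs :
    HasLiftingProperty (pushoutProduct u v) f ↔ HasLiftingProperty v (bsCorner u f) := by
  constructor
  · intro H
    constructor
    intro top' bot' sq
    have hfst : v ≫ bot' ≫ pullback.fst _ _ = top' ≫ bsMapRight V f := by
      rw [← Category.assoc, ← sq.w, Category.assoc, bsCorner_fst]
    have hsnd : v ≫ bot' ≫ pullback.snd _ _ = top' ≫ bsMapLeft u X := by
      rw [← Category.assoc, ← sq.w, Category.assoc, bsCorner_snd]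
    set top2 : extProd V S ⟶ X := bsUncurry top' with htop2
    set bot0 : extProd V T ⟶ Y := bsUncurry (bot' ≫ pullback.fst _ _) with hbot0
    set top1 : extProd U T ⟶ X := bsUncurry (bot' ≫ pullback.snd _ _) with htop1
    have hglue : extProdMap (𝟙 U) v ≫ top1 = extProdMap u (𝟙 S) ≫ top2 := by
      apply bsCurry_inj
      rw [bsCurry_left, bsCurry_middle, htop1, htop2, bsCurry_bsUncurry,
        bsCurry_bsUncurry, ← hsnd]
    have sq2 : CommSq (pushout.desc top1 top2 hglue) (pushoutProduct u v) f bot0 := by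
      constructor
      apply pushout.hom_ext
      · rw [← Category.assoc, ← Category.assoc, pushout.inl_desc, pp_inl]
        apply bsCurry_inj
        rw [bsCurry_right, bsCurry_middle, htop1, hbot0, bsCurry_bsUncurry,
          bsCurry_bsUncurry, Category.assoc, Category.assoc, pullback.condition]
      · rw [← Category.assoc, ← Category.assoc, pushout.inr_desc, pp_inr]
        apply bsCurry_inj
        rw [bsCurry_right, bsCurry_left, htop2, hbot0, bsCurry_bsUncurry,
          bsCurry_bsUncurry, ← hfst]
    refine ⟨⟨⟨bsCurry sq2.lift, ?_, ?_⟩⟩⟩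
    · rw [← bsCurry_left, ← pp_inr u v, Category.assoc, sq2.fac_left,
        pushout.inr_desc, htop2, bsCurry_bsUncurry]
    · apply pullback.hom_ext
      · rw [Category.assoc, bsCorner_fst, ← bsCurry_right, sq2.fac_right, hbot0,
          bsCurry_bsUncurry]
      · rw [Category.assoc, bsCorner_snd, ← bsCurry_middle, ← pp_inl u v,
          Category.assoc, sq2.fac_left, pushout.inl_desc, htop1, bsCurry_bsUncurry]
  · intro H
    constructor
    intro top bot sq
    set top1 : extProd U T ⟶ X := pushout.inl _ _ ≫ top with htop1
    set top2 : extProd V S ⟶ X := pushout.inr _ _ ≫ top with htop2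
    have hb : bsCurry bot ≫ bsMapLeft u Y = bsCurry top1 ≫ bsMapRight U f := by
      rw [← bsCurry_middle, ← bsCurry_right, htop1, Category.assoc, sq.w,
        ← Category.assoc, pp_inl]
    have sq2 : CommSq (bsCurry top2) v (bsCorner u f)
        (pullback.lift (bsCurry bot) (bsCurry top1) hb) := by
      constructor
      apply pullback.hom_ext
      · rw [Category.assoc, Category.assoc, bsCorner_fst, pullback.lift_fst,
          ← bsCurry_right, ← bsCurry_left, htop2, Category.assoc, sq.w,
          ← Category.assoc, pp_inr]
      · rw [Category.assoc, Category.assoc, bsCorner_snd, pullback.lift_snd,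
          ← bsCurry_middle, ← bsCurry_left, htop1, htop2, ← Category.assoc,
          ← Category.assoc, pushout.condition]
    refine ⟨⟨⟨bsUncurry sq2.lift, ?_, ?_⟩⟩⟩
    · apply pushout.hom_ext
      · rw [← Category.assoc, pp_inl]
        apply bsCurry_inj
        rw [bsCurry_middle, bsCurry_bsUncurry]
        have h3 := sq2.fac_right =≫ pullback.snd _ _
        rw [Category.assoc, bsCorner_snd, pullback.lift_snd] at h3
        rw [h3, htop1]
      · rw [← Category.assoc, pp_inr]
        apply bsCurry_inj
        rw [bsCurry_left, bsCurry_bsUncurry, sq2.fac_left, htop2]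
    · apply bsCurry_inj
      rw [bsCurry_right, bsCurry_bsUncurry]
      have h3 := sq2.fac_right =≫ pullback.fst _ _
      rw [Category.assoc, bsCorner_fst, pullback.lift_fst] at h3
      rw [h3]

end

end Aux

open Paper CategoryTheory in
/-- For `u` in `Psh(A)`, `v` in `Psh(B)` and `f` in `Psh(A × B)`, the lifting properties
`(u ⊠' v) ⊥ f`, `u ⊥ ⟨f/v⟩` and `v ⊥ ⟨u\f⟩` are equivalent. -/
theorem stmt2 {A : Type} [SmallCategory A] {B : Type} [SmallCategory B]
    {U V : Aᵒᵖ ⥤ Type} {S T : Bᵒᵖ ⥤ Type} {X Y : (A × B)ᵒᵖ ⥤ Type}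
    (u : U ⟶ V) (v : S ⟶ T) (f : X ⟶ Y) :
    (HasLiftingProperty (pushoutProduct u v) f ↔ HasLiftingProperty u (slCorner f v)) ∧
    (HasLiftingProperty u (slCorner f v) ↔ HasLiftingProperty v (bsCorner u f)) :=
  ⟨Aux.iff_sl u v f, (Aux.iff_sl u v f).symm.trans (Aux.iff_bs u v f)⟩
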